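/- arXiv:0906.1240 — 8 statements merged into one kernel-verified Lean document; each statement's English description precedes it below -/
import Mathlib

section
/- If n ≥ 2 is even and f ∈ ℤ[x] is irreducible with leading coefficient c and content divisor r_f = gcd{f(x) : x ∈ ℤ}, then the set B_f = {a/b : 1 ≤ a < b, b an odd prime, gcd(c·r_f, b) = 1, and a·c·x^(n-1) ≡ −r_f (mod b) has a solution} is dense in the interval (0,1). -/
lemma key_pow (b m : ℕ) [Fact b.Prime] (hcop : Nat.Coprime (b - 1) m) (t : ZMod b)
    (ht : t ≠ 0) : ∃ z : ZMod b, z ^ m = t := by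
  have h : (Nat.card (ZMod b)ˣ).Coprime m := by
    rwa [Nat.card_eq_fintype_card, ZMod.card_units]
  obtain ⟨u, hu⟩ := (powCoprime h).surjective (isUnit_iff_ne_zero.mpr ht).unit
  refine ⟨u, ?_⟩
  have := congrArg Units.val hu
  simpa [powCoprime] using this

/-- `r` is the (nonnegative) gcd of the values of `f` on `ℤ`. -/
def IsGcdOfValues (f : Polynomial ℤ) (r : ℤ) : Prop :=
  0 ≤ r ∧ (∀ x : ℤ, r ∣ f.eval x) ∧ ∀ s : ℤ, (∀ x : ℤ, s ∣ f.eval x) → s ∣ r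

theorem stmt_0 (f : Polynomial ℤ) (n : ℕ) (c r : ℤ)
    (hf : Irreducible f) (hdeg : f.natDegree = n) (hn : 2 ≤ n) (hneven : Even n)
    (hc : f.leadingCoeff = c) (hr : IsGcdOfValues f r) :
    Set.Ioo (0 : ℝ) 1 ⊆ closure
      {x : ℝ | ∃ a b : ℕ, b.Prime ∧ Odd b ∧ 1 ≤ a ∧ a < b ∧
        IsCoprime (c * r) (b : ℤ) ∧
        (∃ z : ℤ, (b : ℤ) ∣ (a : ℤ) * c * z ^ (n - 1) + r) ∧
        x = (a : ℝ) / b} := by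
  -- basic facts
  have hf0 : f ≠ 0 := hf.ne_zero
  have hc0 : c ≠ 0 := by
    rw [← hc]; exact Polynomial.leadingCoeff_ne_zero.mpr hf0
  have hr0 : r ≠ 0 := by
    rintro rfl
    exact hf0 (Polynomial.zero_of_eval_zero f fun x => by
      simpa using hr.2.1 x)
  have hcr0 : c * r ≠ 0 := mul_ne_zero hc0 hr0
  set m : ℕ := n - 1 with hm
  have hm1 : 1 ≤ m := by omega
  have hmodd : Odd m := Nat.Even.sub_odd (by omega) hneven odd_one
  haveI : NeZero m := ⟨by omega⟩
  have h2unit : IsUnit ((2 : ℕ) : ZMod m) := by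
    rw [ZMod.isUnit_iff_coprime]
    exact Nat.coprime_two_left.mpr hmodd
  intro x hx
  obtain ⟨hx0, hx1⟩ := hx
  rw [Metric.mem_closure_iff]
  intro ε hε
  have hδ : 0 < min ε x := lt_min hε hx0
  obtain ⟨N₀, hN₀⟩ := exists_nat_gt (2 / min ε x)
  set N : ℕ := max N₀ (max (c * r).natAbs 2) with hN
  obtain ⟨b, hbN, hbp, hbmod⟩ :=
    Nat.forall_exists_prime_gt_and_eq_mod (q := m) h2unit N
  haveI : Fact b.Prime := ⟨hbp⟩
  have hb2 : 2 < b := lt_of_le_of_lt (le_max_of_le_right (le_max_right _ _)) hbN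
  have hbodd : Odd b := hbp.odd_of_ne_two (by omega)
  have hbpos : (0 : ℝ) < b := by positivity
  -- b is large
  have hbig : 2 / min ε x < (b : ℝ) := by
    have h1 : N₀ ≤ b := le_of_lt (lt_of_le_of_lt (le_max_left _ _) hbN)
    exact lt_of_lt_of_le hN₀ (by exact_mod_cast h1)
  have h2b : 2 / (b : ℝ) < min ε x := by
    rw [div_lt_iff₀ hbpos] at *
    rw [div_lt_iff₀ hδ] at hbig
    nlinarith [hδ, hbpos]
  -- b does not divide c*r
  have hnd : ¬ ((b : ℤ) ∣ c * r) := by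
    intro h
    have h' : b ∣ (c * r).natAbs := Int.natAbs_dvd_natAbs.mpr (by simpa using h)
    have := Nat.le_of_dvd (Int.natAbs_pos.mpr hcr0) h'
    have h2 : (c * r).natAbs ≤ N := le_trans (le_max_left _ _) (le_max_right _ _)
    omega
  have hcop : IsCoprime (c * r) (b : ℤ) := by
    rw [Int.isCoprime_iff_gcd_eq_one]
    have : ¬ b ∣ (c * r).natAbs := fun h => hnd (by
      have := Int.natAbs_dvd.mpr (Int.natCast_dvd_natCast.mpr h)
      simpa [-abs_mul] using this)
    simpa [Int.gcd] using ((hbp.coprime_iff_not_dvd).mpr this).symm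
  -- gcd(b-1, m) = 1
  have hbm : Nat.Coprime (b - 1) m := by
    rw [← ZMod.isUnit_iff_coprime]
    have : ((b - 1 : ℕ) : ZMod m) = 1 := by
      rw [Nat.cast_sub (by omega)]
      rw [hbmod]; push_cast; ring
    rw [this]; exact isUnit_one
  -- choose a
  set a : ℕ := ⌊x * b⌋₊ with ha
  have hxb2 : (2 : ℝ) < x * b := by
    have := min_le_right ε x
    rw [div_lt_iff₀ hbpos] at h2b
    nlinarith
  have ha1 : 1 ≤ a := Nat.le_floor (by push_cast; linarith)
  have hab : a < b := by
    rw [ha, Nat.floor_lt (by positivity)]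
    nlinarith
  -- a, c, r nonzero mod b
  have haz : ((a : ℤ) : ZMod b) ≠ 0 := by
    intro h
    rw [ZMod.intCast_zmod_eq_zero_iff_dvd] at h
    have h' : b ∣ a := by exact_mod_cast (by simpa using h : (b:ℤ) ∣ (a:ℤ))
    have := Nat.le_of_dvd (by omega) h'
    omega
  have hcrz : ((c * r : ℤ) : ZMod b) ≠ 0 := fun h =>
    hnd ((ZMod.intCast_zmod_eq_zero_iff_dvd _ _).mp h)
  have hcz : ((c : ℤ) : ZMod b) ≠ 0 := fun h => hcrz (by push_cast; rw [h]; ring)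
  have hrz : ((r : ℤ) : ZMod b) ≠ 0 := fun h => hcrz (by push_cast; rw [h]; ring)
  -- solve the congruence
  have hA : ((a : ℤ) : ZMod b) * ((c : ℤ) : ZMod b) ≠ 0 := mul_ne_zero haz hcz
  obtain ⟨z0, hz0⟩ := key_pow b m hbm
    (-((r : ℤ) : ZMod b) * (((a : ℤ) : ZMod b) * ((c : ℤ) : ZMod b))⁻¹)
    (by
      apply mul_ne_zero (neg_ne_zero.mpr hrz)
      exact inv_ne_zero hA)
  have hsol : ∃ z : ℤ, (b : ℤ) ∣ (a : ℤ) * c * z ^ m + r := by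
    refine ⟨(z0.val : ℤ), ?_⟩
    rw [← ZMod.intCast_zmod_eq_zero_iff_dvd]
    have hmain : (((a : ℤ) : ZMod b) * ((c : ℤ) : ZMod b)) * z0 ^ m
        + ((r : ℤ) : ZMod b) = 0 := by
      rw [hz0, mul_left_comm, mul_inv_cancel₀ hA, mul_one, neg_add_cancel]
    push_cast at hmain ⊢
    rw [ZMod.natCast_val, ZMod.cast_id]
    exact hmain
  -- membership and distance
  refine ⟨(a : ℝ) / b, ⟨a, b, hbp, hbodd, ha1, hab, hcop, hsol, rfl⟩, ?_⟩
  have hfl : (a : ℝ) ≤ x * b := Nat.floor_le (by positivity)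
  have hfl2 : x * b < a + 1 := Nat.lt_floor_add_one _
  rw [Real.dist_eq, abs_of_nonneg (by rw [sub_nonneg, div_le_iff₀ hbpos]; linarith)]
  have h1b : (1 : ℝ) / b < ε := by
    have hεx := min_le_left ε x
    rw [div_lt_iff₀ hbpos] at h2b ⊢
    nlinarith
  have hxa : x - (a : ℝ) / b < 1 / b := by
    rw [sub_lt_iff_lt_add, ← add_div, lt_div_iff₀ hbpos]
    linarith
  linarith
end

section
/- If f ∈ ℤ[x] is irreducible of degree n ≥ 2 with leading coefficient c and r_f = gcd{f(x) : x ∈ ℤ}, then the set B_f = {a/b : 1 ≤ a < b, b an odd prime, gcd(c·r_f, b) = 1, a·c·x^(n-1) ≡ −r_f (mod b) solvable} is dense in (0,1). -/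
private lemma aux_coprime_of_prime_not_dvd {p : ℕ} (hp : p.Prime) {a : ℤ}
    (h : ¬ (p : ℤ) ∣ a) : IsCoprime a (p : ℤ) := by
  rw [Int.isCoprime_iff_gcd_eq_one]
  have h' : ¬ p ∣ a.natAbs := fun hd => h (Int.dvd_natAbs.mp (Int.natCast_dvd_natCast.mpr hd))
  have h2 : Nat.Coprime p a.natAbs := (Nat.Prime.coprime_iff_not_dvd hp).mpr h'
  have := h2.symm
  simpa [Int.gcd] using this

private lemma aux_not_dvd_of_natAbs_lt {p : ℕ} {a : ℤ} (ha : a ≠ 0) (h : a.natAbs < p) :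
    ¬ (p : ℤ) ∣ a := by
  intro hd
  have h1 : p ∣ a.natAbs := by
    have := Int.natAbs_dvd_natAbs.mpr hd
    simpa using this
  have := Nat.le_of_dvd (Int.natAbs_pos.mpr ha) h1
  omega

set_option maxHeartbeats 2000000 in
private lemma key (c r : ℤ) (hc : c ≠ 0) (hr : 0 < r) (m : ℕ) (hm : 1 ≤ m)
    (t ε : ℝ) (ht0 : 0 < t) (ht1 : t < 1) (hε : 0 < ε) :
    ∃ a b : ℕ, b.Prime ∧ Odd b ∧ 1 ≤ a ∧ a < b ∧ IsCoprime (c * r) (b : ℤ) ∧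
      (∃ z : ℤ, (b : ℤ) ∣ (a : ℤ) * c * z ^ m + r) ∧ |(a : ℝ) / b - t| < ε := by
  classical
  set ε' : ℝ := min ε (min t (1 - t)) with hε'def
  have hε'pos : 0 < ε' := lt_min hε (lt_min ht0 (by linarith))
  have hε'ε : ε' ≤ ε := min_le_left _ _
  have hε't : ε' ≤ t := le_trans (min_le_right _ _) (min_le_left _ _)
  have hε't1 : ε' ≤ 1 - t := le_trans (min_le_right _ _) (min_le_right _ _)
  -- split off the gcd of c and r
  have hgcd0 : Int.gcd c r ≠ 0 := fun h => hc (Int.gcd_eq_zero_iff.mp h).1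
  set d : ℤ := (Int.gcd c r : ℤ) with hddef
  have hd0 : 0 < d := by
    have := Nat.pos_of_ne_zero hgcd0
    rw [hddef]; exact_mod_cast this
  set c' : ℤ := c / d with hc'def
  set r' : ℤ := r / d with hr'def
  have hdc : d * c' = c := Int.mul_ediv_cancel' (Int.gcd_dvd_left _ _)
  have hdr : d * r' = r := Int.mul_ediv_cancel' (Int.gcd_dvd_right _ _)
  have hc'0 : c' ≠ 0 := by
    intro h
    exact hc (by rw [← hdc, h, mul_zero])
  have hr'0 : 0 < r' := by nlinarith [hdr, hd0, hr]
  have hcop : IsCoprime c' r' := by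
    rw [Int.isCoprime_iff_gcd_eq_one, hc'def, hr'def, hddef]
    exact Int.gcd_div_gcd_div_gcd (Nat.pos_of_ne_zero hgcd0)
  have hc'dvd : c' ∣ c := ⟨d, by rw [← hdc]; ring⟩
  have hr'dvd : r' ∣ r := ⟨d, by rw [← hdr]; ring⟩
  have hc'le : c'.natAbs ≤ c.natAbs :=
    Nat.le_of_dvd (Int.natAbs_pos.mpr hc) (Int.natAbs_dvd_natAbs.mpr hc'dvd)
  have hr'le : r'.natAbs ≤ r.natAbs :=
    Nat.le_of_dvd (Int.natAbs_pos.mpr hr.ne') (Int.natAbs_dvd_natAbs.mpr hr'dvd)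
  -- choose a large prime z
  obtain ⟨z, hzge, hzp⟩ :=
    Nat.exists_infinite_primes (max (c.natAbs + r.natAbs + 2) (⌈4 / ε'⌉₊ + 1))
  have hAz : c.natAbs + r.natAbs + 2 ≤ z := le_trans (le_max_left _ _) hzge
  have hBz : ⌈4 / ε'⌉₊ + 1 ≤ z := le_trans (le_max_right _ _) hzge
  have hzRceil : (⌈4 / ε'⌉₊ : ℝ) < (z : ℝ) := by exact_mod_cast (by omega : ⌈4 / ε'⌉₊ < z)
  have hzR : 4 / ε' < (z : ℝ) := lt_of_le_of_lt (Nat.le_ceil _) hzRceil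
  have hzpos : (0 : ℝ) < (z : ℝ) := by exact_mod_cast (by omega : 0 < z)
  have hZ0 : (0 : ℤ) < (z : ℤ) := by exact_mod_cast (by omega : 0 < z)
  set e : ℤ := c' * (z : ℤ) ^ m with hedef
  have he0 : e ≠ 0 := mul_ne_zero hc'0 (pow_ne_zero _ hZ0.ne')
  have heR : ((e : ℤ) : ℝ) ≠ 0 := by exact_mod_cast he0
  have hc'R : ((c' : ℤ) : ℝ) ≠ 0 := by exact_mod_cast hc'0
  -- choose k close to t * e with k = 1 + c' * (something), z ∤ k
  set xr : ℝ := (t * (e : ℝ) - 1) / (c' : ℝ) with hxrdef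
  set j : ℤ := ⌊xr⌋ with hjdef
  have hjx : |(j : ℝ) - xr| ≤ 1 := by
    rw [abs_le]
    constructor
    · linarith [Int.sub_one_lt_floor xr]
    · linarith [Int.floor_le xr]
  have hcxr : (c' : ℝ) * xr = t * (e : ℝ) - 1 := by
    rw [hxrdef]; field_simp
  have key0 : ((1 + c' * j : ℤ) : ℝ) - t * (e : ℝ) = (c' : ℝ) * ((j : ℝ) - xr) := by
    push_cast
    linear_combination hcxr
  have key1 : ((1 + c' * (j + 1) : ℤ) : ℝ) - t * (e : ℝ)
      = (c' : ℝ) * (((j : ℝ) - xr) + 1) := by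
    push_cast
    linear_combination hcxr
  have hzc'not : ¬ (z : ℤ) ∣ c' := aux_not_dvd_of_natAbs_lt hc'0 (by omega)
  obtain ⟨k, hkZ, hkclose, hkc'⟩ :
      ∃ k : ℤ, ¬ (z : ℤ) ∣ k ∧ |(k : ℝ) - t * (e : ℝ)| ≤ 2 * |(c' : ℝ)| ∧ IsCoprime k c' := by
    by_cases hd1 : (z : ℤ) ∣ 1 + c' * j
    · refine ⟨1 + c' * (j + 1), ?_, ?_, ⟨1, -(j + 1), by ring⟩⟩
      · intro hd2
        have hsub := dvd_sub hd2 hd1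
        have heq : (1 + c' * (j + 1)) - (1 + c' * j) = c' := by ring
        rw [heq] at hsub
        exact hzc'not hsub
      · rw [key1, abs_mul]
        have h5 : |((j : ℝ) - xr) + 1| ≤ 2 := by
          calc |((j : ℝ) - xr) + 1| ≤ |(j : ℝ) - xr| + |(1 : ℝ)| := abs_add_le _ _
          _ ≤ 2 := by rw [abs_one]; linarith
        nlinarith [abs_nonneg ((c' : ℝ)), abs_nonneg ((j : ℝ) - xr)]
    · refine ⟨1 + c' * j, hd1, ?_, ⟨1, -j, by ring⟩⟩
      rw [key0, abs_mul]
      nlinarith [abs_nonneg ((c' : ℝ)), abs_nonneg ((j : ℝ) - xr)]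
  have hkz : IsCoprime k ((z : ℤ)) := aux_coprime_of_prime_not_dvd hzp hkZ
  have hke : IsCoprime k e := by
    rw [hedef]
    exact hkc'.mul_right (hkz.pow_right)
  have hr'z : IsCoprime r' ((z : ℤ)) :=
    aux_coprime_of_prime_not_dvd hzp (aux_not_dvd_of_natAbs_lt hr'0.ne' (by omega))
  have hr'e : IsCoprime r' e := by
    rw [hedef]
    exact hcop.symm.mul_right (hr'z.pow_right)
  obtain ⟨u, v, huv⟩ := hke
  have hue : IsCoprime u e := ⟨k, v, by linear_combination huv⟩
  set b0 : ℤ := u * r' with hb0def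
  have hb0e : IsCoprime b0 e := hue.mul_left hr'e
  have hkb0 : e ∣ k * b0 - r' := ⟨-(v * r'), by linear_combination r' * huv⟩
  -- Dirichlet
  have hN0 : e.natAbs ≠ 0 := Int.natAbs_ne_zero.mpr he0
  haveI : NeZero e.natAbs := ⟨hN0⟩
  have hcastE : ((e : ℤ) : ZMod e.natAbs) = 0 :=
    (ZMod.intCast_zmod_eq_zero_iff_dvd _ _).mpr (Int.natAbs_dvd.mpr dvd_rfl)
  have hunit : IsUnit ((b0 : ℤ) : ZMod e.natAbs) := by
    obtain ⟨x, y, hxy⟩ := hb0e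
    apply IsUnit.of_mul_eq_one ((x : ℤ) : ZMod e.natAbs)
    have h : ((x * b0 + y * e : ℤ) : ZMod e.natAbs) = 1 := by rw [hxy]; exact Int.cast_one
    push_cast at h
    rw [hcastE] at h
    rw [mul_comm]
    simpa using h
  obtain ⟨p, hpP, hpp, hpcast⟩ := Nat.forall_exists_prime_gt_and_eq_mod hunit
    ((c * r).natAbs + 2 + ⌈2 * |(r : ℝ)| / ε'⌉₊)
  have hpR : (0 : ℝ) < (p : ℝ) := by exact_mod_cast hpp.pos
  have hep : e ∣ (p : ℤ) - b0 := by
    have h1 : (((p : ℤ)) : ZMod e.natAbs) = ((b0 : ℤ) : ZMod e.natAbs) := by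
      rw [Int.cast_natCast]; exact hpcast
    have h2 := (ZMod.intCast_eq_intCast_iff _ _ _).mp h1
    have h3 : ((e.natAbs : ℕ) : ℤ) ∣ b0 - (p : ℤ) := Int.ModEq.dvd h2
    have h4 : ((e.natAbs : ℕ) : ℤ) ∣ (p : ℤ) - b0 := by
      have h4' := dvd_neg.mpr h3
      rwa [neg_sub] at h4'
    exact Int.natAbs_dvd.mp h4
  have hediv : e ∣ k * (p : ℤ) - r' := by
    have h1 : k * (p : ℤ) - r' = k * ((p : ℤ) - b0) + (k * b0 - r') := by ring
    rw [h1]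
    exact dvd_add (Dvd.dvd.mul_left hep k) hkb0
  set A : ℤ := (k * (p : ℤ) - r') / e with hAdef
  have hAe : A * e = k * (p : ℤ) - r' := Int.ediv_mul_cancel hediv
  have hdvd : (p : ℤ) ∣ A * c * (z : ℤ) ^ m + r := by
    refine ⟨d * k, ?_⟩
    have h2 : A * c * (z : ℤ) ^ m + r = d * (A * e + r') := by
      rw [← hdc, ← hdr, hedef]; ring
    rw [h2, hAe]; ring
  -- real estimates
  have habs_e : |(e : ℝ)| = |(c' : ℝ)| * (z : ℝ) ^ m := by
    rw [hedef]
    push_cast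
    rw [abs_mul, abs_pow, Nat.abs_cast]
  have hepos : (0 : ℝ) < |(c' : ℝ)| * (z : ℝ) ^ m := by
    apply mul_pos (abs_pos.mpr hc'R)
    positivity
  have hz1m : (z : ℝ) ≤ (z : ℝ) ^ m := le_self_pow₀ (by exact_mod_cast (by omega : 1 ≤ z)) (by omega)
  have hkre : |(k : ℝ) / (e : ℝ) - t| ≤ 2 / (z : ℝ) := by
    have hsub : (k : ℝ) / (e : ℝ) - t = ((k : ℝ) - t * (e : ℝ)) / (e : ℝ) := by
      rw [sub_div, mul_div_cancel_right₀ _ heR]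
    rw [hsub, abs_div, habs_e, div_le_div_iff₀ hepos hzpos]
    linarith [mul_le_mul_of_nonneg_right hkclose hzpos.le,
      mul_le_mul_of_nonneg_left hz1m (abs_nonneg ((c' : ℝ)))]
  have h2z : 2 / (z : ℝ) < ε' / 2 := by
    rw [div_lt_div_iff₀ hzpos (by norm_num : (0:ℝ) < 2)]
    have h4 : 4 < (z : ℝ) * ε' := (div_lt_iff₀ hε'pos).mp hzR
    linarith
  have hAe' : (A : ℝ) * (e : ℝ) = (k : ℝ) * (p : ℝ) - (r' : ℝ) := by exact_mod_cast hAe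
  have hA' : (A : ℝ) = ((k : ℝ) * (p : ℝ) - (r' : ℝ)) / (e : ℝ) := (eq_div_iff heR).mpr hAe'
  have hfinal : |(A : ℝ) / (p : ℝ) - t| < ε' := by
    have hdiff : (A : ℝ) / (p : ℝ) - t
        = ((k : ℝ) / (e : ℝ) - t) - (r' : ℝ) / ((e : ℝ) * (p : ℝ)) := by
      rw [hA']
      field_simp
      ring
    rw [hdiff]
    have hb2 : |(r' : ℝ) / ((e : ℝ) * (p : ℝ))| < ε' / 2 := by
      rw [abs_div, abs_mul, abs_of_pos hpR]
      have h1 : |(r' : ℝ)| ≤ |(r : ℝ)| := by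
        have h1' : |r'| ≤ |r| :=
          Int.le_of_dvd (abs_pos.mpr hr.ne') (by simpa [abs_dvd, dvd_abs] using hr'dvd)
        exact_mod_cast h1'
      have he1 : (1 : ℝ) ≤ |(e : ℝ)| := by
        have := Int.one_le_abs (by exact_mod_cast he0 : e ≠ 0)
        exact_mod_cast this
      have h2 : (p : ℝ) ≤ |(e : ℝ)| * (p : ℝ) := by nlinarith
      have h3 : |(r' : ℝ)| / (|(e : ℝ)| * (p : ℝ)) ≤ |(r : ℝ)| / (p : ℝ) :=
        div_le_div₀ (abs_nonneg _) h1 hpR h2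
      have hPc : (⌈2 * |(r : ℝ)| / ε'⌉₊ : ℝ) < (p : ℝ) := by
        exact_mod_cast (by omega : ⌈2 * |(r : ℝ)| / ε'⌉₊ < p)
      have h5 : 2 * |(r : ℝ)| / ε' < (p : ℝ) := lt_of_le_of_lt (Nat.le_ceil _) hPc
      have h6 : 2 * |(r : ℝ)| < (p : ℝ) * ε' := (div_lt_iff₀ hε'pos).mp h5
      have h4 : |(r : ℝ)| / (p : ℝ) < ε' / 2 := by
        rw [div_lt_div_iff₀ hpR (by norm_num : (0:ℝ) < 2)]
        linarith
      linarith [h3, h4]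
    have habs : |((k : ℝ) / (e : ℝ) - t) - (r' : ℝ) / ((e : ℝ) * (p : ℝ))|
        ≤ |(k : ℝ) / (e : ℝ) - t| + |(r' : ℝ) / ((e : ℝ) * (p : ℝ))| := by
      have := abs_add_le ((k : ℝ) / (e : ℝ) - t) (-((r' : ℝ) / ((e : ℝ) * (p : ℝ))))
      simpa [sub_eq_add_neg] using this
    linarith [hkre, h2z, hb2, habs]
  obtain ⟨hflo, hfhi⟩ := abs_lt.mp hfinal
  have hAposR : 0 < (A : ℝ) / (p : ℝ) := by linarith
  have hAp1 : (A : ℝ) / (p : ℝ) < 1 := by linarith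
  have hAeq : (A : ℝ) = (A : ℝ) / (p : ℝ) * (p : ℝ) := by field_simp
  have hApos : 0 < A := by
    have h : (0 : ℝ) < (A : ℝ) := by rw [hAeq]; exact mul_pos hAposR hpR
    exact_mod_cast h
  have hAltp : A < (p : ℤ) := by
    have h : (A : ℝ) < (p : ℝ) := by
      calc (A : ℝ) = (A : ℝ) / (p : ℝ) * (p : ℝ) := hAeq
      _ < 1 * (p : ℝ) := mul_lt_mul_of_pos_right hAp1 hpR
      _ = (p : ℝ) := one_mul _
    exact_mod_cast h
  refine ⟨A.toNat, p, hpp, ?_, ?_, ?_, ?_, ⟨(z : ℤ), ?_⟩, ?_⟩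
  · exact hpp.odd_of_ne_two (by omega)
  · omega
  · omega
  · have hcr0 : c * r ≠ 0 := mul_ne_zero hc hr.ne'
    exact aux_coprime_of_prime_not_dvd hpp
      (aux_not_dvd_of_natAbs_lt hcr0 (by omega))
  · rw [Int.toNat_of_nonneg hApos.le]
    exact hdvd
  · have hcastA : ((A.toNat : ℕ) : ℝ) = ((A : ℤ) : ℝ) := by
      exact_mod_cast congrArg (fun i : ℤ => (i : ℝ)) (Int.toNat_of_nonneg hApos.le)
    rw [hcastA]
    exact lt_of_lt_of_le hfinal hε'ε

theorem stmt_1 (f : Polynomial ℤ) (n : ℕ) (c r : ℤ)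
    (hf : Irreducible f) (hdeg : f.natDegree = n) (hn : 2 ≤ n)
    (hc : f.leadingCoeff = c) (hr : IsGcdOfValues f r) :
    Set.Ioo (0 : ℝ) 1 ⊆ closure
      {x : ℝ | ∃ a b : ℕ, b.Prime ∧ Odd b ∧ 1 ≤ a ∧ a < b ∧
        IsCoprime (c * r) (b : ℤ) ∧
        (∃ z : ℤ, (b : ℤ) ∣ (a : ℤ) * c * z ^ (n - 1) + r) ∧
        x = (a : ℝ) / b} := by
  have hf0 : f ≠ 0 := hf.ne_zero
  have hc0 : c ≠ 0 := by
    rw [← hc]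
    exact Polynomial.leadingCoeff_ne_zero.mpr hf0
  have hr0 : 0 < r := by
    rcases hr with ⟨hr0, hrdvd, -⟩
    rcases hr0.lt_or_eq with h | h
    · exact h
    · exfalso
      have hev : f.eval 0 = 0 := by
        have := hrdvd 0
        rw [← h] at this
        exact zero_dvd_iff.mp this
      have hX : Polynomial.X ∣ f := Polynomial.X_dvd_iff.mpr
        (by rw [Polynomial.coeff_zero_eq_eval_zero]; exact hev)
      obtain ⟨g, hg⟩ := hX
      rcases hf.isUnit_or_isUnit hg with h' | h'
      · exact Polynomial.not_isUnit_X h'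
      · have hg0 : g ≠ 0 := by
          rintro rfl
          rw [mul_zero] at hg
          exact hf0 hg
        have hdg : g.natDegree = 0 := Polynomial.natDegree_eq_zero_of_isUnit h'
        have : f.natDegree = 1 := by
          rw [hg, Polynomial.natDegree_mul Polynomial.X_ne_zero hg0,
            Polynomial.natDegree_X, hdg]
        omega
  intro t ht
  rw [Metric.mem_closure_iff]
  intro ε hε
  obtain ⟨a, b, h1, h2, h3, h4, h5, h6, h7⟩ :=
    key c r hc0 hr0 (n - 1) (by omega) t ε ht.1 ht.2 hε
  refine ⟨(a : ℝ) / b, ⟨a, b, h1, h2, h3, h4, h5, h6, rfl⟩, ?_⟩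
  rw [Real.dist_eq, abs_sub_comm]
  exact h7
end

section
/- Let p be a prime with p ≡ 3 (mod 4), and write an even number n−1 = 2^e · h with h odd and gcd(h, p−1) = 1. Then the image of the map x ↦ x^(n-1) on (ℤ/pℤ)* is exactly the set of nonzero quadratic residues mod p. -/
theorem stmt_4 (p : ℕ) (hp : p.Prime) (hp3 : p % 4 = 3)
    (n e h : ℕ) (hn : 3 ≤ n) (hnodd : Odd n)
    (hfac : n - 1 = 2 ^ e * h) (he : 1 ≤ e) (hh : Odd h)
    (hgcd : Nat.gcd h (p - 1) = 1) :
    Set.range (fun x : (ZMod p)ˣ => x ^ (n - 1))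
      = {x : (ZMod p)ˣ | IsSquare x} := by
  haveI : Fact p.Prime := ⟨hp⟩
  -- gcd(n-1, p-1) divides 2
  have hcop : Nat.Coprime h (p - 1) := hgcd
  have hgcd1 : Nat.gcd (n - 1) (p - 1) = Nat.gcd (2 ^ e) (p - 1) := by
    rw [hfac]
    exact Nat.Coprime.gcd_mul_right_cancel (2 ^ e) hcop
  have hdvd2 : Nat.gcd (n - 1) (p - 1) ∣ 2 := by
    rw [hgcd1]
    obtain ⟨j, hj, hje⟩ := (Nat.dvd_prime_pow Nat.prime_two).mp
      (Nat.gcd_dvd_left (2 ^ e) (p - 1))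
    have hdp : 2 ^ j ∣ (p - 1) := hje ▸ Nat.gcd_dvd_right (2 ^ e) (p - 1)
    have hj1 : j ≤ 1 := by
      by_contra hc
      push_neg at hc
      have h4 : 4 ∣ (p - 1) := dvd_trans (by
        have : (2:ℕ) ^ 2 ∣ 2 ^ j := pow_dvd_pow 2 hc
        simpa using this) hdp
      omega
    rw [hje]
    calc (2:ℕ) ^ j ∣ 2 ^ 1 := pow_dvd_pow 2 hj1
    _ = 2 := pow_one 2
  ext y
  simp only [Set.mem_range, Set.mem_setOf_eq]
  constructor
  · rintro ⟨x, rfl⟩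
    have h2 : 2 ∣ n - 1 := by
      rw [hfac]
      exact Dvd.dvd.mul_right (dvd_pow_self 2 (by omega)) h
    obtain ⟨k, hk⟩ := h2
    exact ⟨x ^ k, by rw [hk, pow_mul, sq, mul_pow]⟩
  · rintro ⟨z, rfl⟩
    -- Bezout: gcd = (n-1)*A + (p-1)*B ; and gcd * c = 2
    obtain ⟨c, hc⟩ := hdvd2
    set A := Nat.gcdA (n - 1) (p - 1)
    set B := Nat.gcdB (n - 1) (p - 1)
    have hbez : (Nat.gcd (n - 1) (p - 1) : ℤ)
        = ((n - 1 : ℕ) : ℤ) * A + ((p - 1 : ℕ) : ℤ) * B :=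
      Nat.gcd_eq_gcd_ab (n - 1) (p - 1)
    have hz1 : z ^ (p - 1) = 1 := ZMod.units_pow_card_sub_one_eq_one p z
    refine ⟨z ^ (A * c), ?_⟩
    have key : (z ^ (A * c)) ^ (n - 1) = z * z := by
      rw [← zpow_natCast (z ^ (A * (c : ℤ))) (n - 1), ← zpow_mul]
      have h2n : ((2 : ℕ) : ℤ) = ((Nat.gcd (n - 1) (p - 1) : ℤ)) * c := by
        exact_mod_cast congrArg (Nat.cast : ℕ → ℤ) hc
      have : A * c * ((n - 1 : ℕ) : ℤ)
          = 2 - ((p - 1 : ℕ) : ℤ) * (B * c) := by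
        have := hbez
        push_cast at h2n ⊢
        nlinarith [hbez, h2n]
      rw [this, zpow_sub, zpow_two]
      have hz0 : z ^ (((p - 1 : ℕ) : ℤ) * (B * c)) = 1 := by
        rw [zpow_mul, zpow_natCast, hz1, one_zpow]
      rw [hz0, inv_one, mul_one]
    simpa using key
end

section
/- Let f ∈ ℤ[x] be irreducible of degree n with homogenization g(x,y) = Σᵢ cᵢ xⁱ y^(n−i). For any prime b with gcd(b, c·r_f) = 1 (c the leading coefficient, r_f = gcd of values of f) and any integer t with 1 ≤ t < b, the polynomial w ↦ g(bw + t, b) is irreducible in ℤ[w]. -/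
open Polynomial

private lemma map_f_sum {K : Type*} [Field K] (f : Polynomial ℤ) (n : ℕ)
    (hdeg : f.natDegree = n) (ψ : ℤ →+* K) :
    f.map ψ = ∑ i ∈ Finset.range (n + 1), C (ψ (f.coeff i)) * X ^ i := by
  conv_lhs => rw [f.as_sum_range' (n + 1) (by omega)]
  rw [Polynomial.map_sum]
  refine Finset.sum_congr rfl fun i _ => ?_
  rw [map_monomial, C_mul_X_pow_eq_monomial]

private lemma aux_map {K : Type*} [Field K] (f : Polynomial ℤ) (n : ℕ)
    (hdeg : f.natDegree = n) (ψ : ℤ →+* K) (b t : ℤ) (hb : ψ b ≠ 0) :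
    (∑ i ∈ Finset.range (n + 1),
        C (f.coeff i) * (C b * X + C t) ^ i * C b ^ (n - i)).map ψ
      = C (ψ b ^ n) * (f.map ψ).comp (X + C (ψ t / ψ b)) := by
  rw [map_f_sum f n hdeg ψ, Polynomial.map_sum, sum_comp, Finset.mul_sum]
  refine Finset.sum_congr rfl fun i hi => ?_
  have hin : i ≤ n := Nat.lt_succ_iff.mp (Finset.mem_range.mp hi)
  have h1 : (C (ψ b) : K[X]) * (X + C (ψ t / ψ b)) = C (ψ b) * X + C (ψ t) := by
    rw [mul_add, ← C_mul, mul_div_cancel₀ _ hb]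
  have h2 : (C (ψ b) : K[X]) ^ n = C (ψ b) ^ i * C (ψ b) ^ (n - i) := by
    rw [← pow_add, Nat.add_sub_cancel' hin]
  simp only [Polynomial.map_mul, Polynomial.map_pow, Polynomial.map_add, map_C, map_X,
    mul_comp, pow_comp, X_comp, C_comp]
  rw [← h1, mul_pow, C_pow, h2]
  ring

private lemma aux_map0 {K : Type*} [Field K] (f : Polynomial ℤ) (n : ℕ)
    (ψ : ℤ →+* K) (b t : ℤ) (hb : ψ b = 0) :
    (∑ i ∈ Finset.range (n + 1),
        C (f.coeff i) * (C b * X + C t) ^ i * C b ^ (n - i)).map ψ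
      = C (ψ (f.coeff n) * ψ t ^ n) := by
  rw [Polynomial.map_sum]
  rw [Finset.sum_eq_single_of_mem n (Finset.self_mem_range_succ n)]
  · simp only [Polynomial.map_mul, Polynomial.map_pow, Polynomial.map_add, map_C, map_X,
      hb, C_0, zero_mul, zero_add, Nat.sub_self, pow_zero, mul_one, ← C_pow, ← C_mul]
  · intro j hj hjn
    have hjn' : j < n := lt_of_le_of_ne (Nat.lt_succ_iff.mp (Finset.mem_range.mp hj)) hjn
    simp only [Polynomial.map_mul, Polynomial.map_pow, Polynomial.map_add, map_C, map_X, hb]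
    rw [C_0, zero_pow (Nat.sub_ne_zero_of_lt hjn')]
    ring

theorem stmt_7 (f : Polynomial ℤ) (n : ℕ) (c r : ℤ)
    (hf : Irreducible f) (hdeg : f.natDegree = n) (hn : 1 ≤ n)
    (hc : f.leadingCoeff = c) (hr : IsGcdOfValues f r)
    (b t : ℤ) (hb : Prime b) (hcop : IsCoprime b (c * r)) (ht : 1 ≤ t) (htb : t < b) :
    Irreducible
      (∑ i ∈ Finset.range (n + 1),
        C (f.coeff i) * (C b * X + C t) ^ i * C b ^ (n - i)) := by
  subst hdeg
  subst hc
  set n := f.natDegree with hn'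
  set c := f.leadingCoeff with hc'
  set P : Polynomial ℤ := ∑ i ∈ Finset.range (n + 1),
      C (f.coeff i) * (C b * X + C t) ^ i * C b ^ (n - i) with hP
  have hcoefn : f.coeff n = c := rfl
  -- f is primitive
  have hprim : f.IsPrimitive := by
    intro d hd
    obtain ⟨g, hg⟩ := hd
    rcases hf.isUnit_or_isUnit hg with h | h
    · exact isUnit_C.mp h
    · exfalso
      obtain ⟨u, hu, hug⟩ := Polynomial.isUnit_iff.mp h
      have : f = C (d * u) := by rw [hg, ← hug, C_mul]
      have : f.natDegree = 0 := by rw [this, natDegree_C]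
      omega
  -- P is primitive
  have hPprim : P.IsPrimitive := by
    intro d hd
    by_contra hdu
    obtain ⟨q, hq, hqd⟩ := Int.exists_prime_and_dvd
      (fun h => hdu (Int.isUnit_iff_natAbs_eq.mpr h))
    set m := q.natAbs with hm'
    have hm : m.Prime := Int.prime_iff_natAbs_prime.mp hq
    haveI := Fact.mk hm
    have hmZprime : Prime (m : ℤ) := Int.prime_iff_natAbs_prime.mpr (by simpa using hm)
    set ψ := Int.castRingHom (ZMod m) with hψ
    have hCq : (C q : Polynomial ℤ) ∣ P := dvd_trans (map_dvd C hqd) hd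
    have hmapP : P.map ψ = 0 := by
      obtain ⟨P', hP'⟩ := hCq
      rw [hP', Polynomial.map_mul, map_C]
      have hq0 : ψ q = 0 :=
        (ZMod.intCast_zmod_eq_zero_iff_dvd q m).mpr (Int.natAbs_dvd.mpr dvd_rfl)
      rw [hq0, C_0, zero_mul]
    by_cases hψb : ψ b = 0
    · have h0 := aux_map0 f n ψ b t hψb
      rw [hmapP] at h0
      have h1 : ψ c * ψ t ^ n = 0 := by
        rw [hcoefn] at h0
        exact (C_eq_zero.mp h0.symm)
      have hmb : (m : ℤ) ∣ b := (ZMod.intCast_zmod_eq_zero_iff_dvd b m).mp hψb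
      rcases mul_eq_zero.mp h1 with h | h
      · have hmc : (m : ℤ) ∣ c := (ZMod.intCast_zmod_eq_zero_iff_dvd c m).mp h
        exact hmZprime.not_unit
          (hcop.isUnit_of_dvd' hmb (dvd_mul_of_dvd_left hmc r))
      · have ht0 : ψ t = 0 := pow_eq_zero_iff (by omega) |>.mp h
        have hmt : (m : ℤ) ∣ t := (ZMod.intCast_zmod_eq_zero_iff_dvd t m).mp ht0
        have hassoc : Associated ((m : ℤ)) b := hmZprime.associated_of_dvd hb hmb
        have hbt : b ∣ t := hassoc.symm.dvd.trans hmt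
        have := Int.le_of_dvd (by omega) hbt
        omega
    · have h1 := aux_map f n rfl ψ b t hψb
      rw [hmapP] at h1
      have h2 : (f.map ψ).comp (X + C (ψ t / ψ b)) = 0 := by
        rcases mul_eq_zero.mp h1.symm with h | h
        · exact absurd (C_eq_zero.mp h) (pow_ne_zero _ hψb)
        · exact h
      have h3 : f.map ψ = 0 := comp_X_add_C_eq_zero_iff.mp h2
      have hCm : (C ((m : ℤ)) : Polynomial ℤ) ∣ f := by
        rw [C_dvd_iff_dvd_coeff]
        intro i
        have : ψ (f.coeff i) = 0 := by
          rw [← coeff_map, h3, coeff_zero]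
        exact (ZMod.intCast_zmod_eq_zero_iff_dvd _ m).mp this
      exact hmZprime.not_unit (hprim _ hCm)
  -- pass to ℚ
  have hbQ : ((Int.castRingHom ℚ) b) ≠ 0 := by
    simp only [eq_intCast, ne_eq, Int.cast_eq_zero]
    exact hb.ne_zero
  rw [Polynomial.IsPrimitive.Int.irreducible_iff_irreducible_map_cast hPprim, hP,
    aux_map f n rfl (Int.castRingHom ℚ) b t hbQ]
  have hu : IsUnit (C ((Int.castRingHom ℚ) b ^ n) : Polynomial ℚ) :=
    isUnit_C.mpr (isUnit_iff_ne_zero.mpr (pow_ne_zero _ hbQ))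
  rw [irreducible_isUnit_mul hu]
  have hfQ : Irreducible (f.map (Int.castRingHom ℚ)) :=
    (Polynomial.IsPrimitive.Int.irreducible_iff_irreducible_map_cast hprim).mp hf
  have hcomp : (f.map (Int.castRingHom ℚ)).comp
      (X + C ((Int.castRingHom ℚ) t / (Int.castRingHom ℚ) b))
      = algEquivAevalXAddC ((Int.castRingHom ℚ) t / (Int.castRingHom ℚ) b)
          (f.map (Int.castRingHom ℚ)) := by
    rw [algEquivAevalXAddC_apply, comp_eq_aeval]
  rw [hcomp]
  exact (MulEquiv.irreducible_iff
    (algEquivAevalXAddC ((Int.castRingHom ℚ) t / (Int.castRingHom ℚ) b))).mpr hfQ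
end

section
/- Let f ∈ ℤ[x] with homogenization g, let r = gcd{f(x) : x ∈ ℤ}, let b be a prime with gcd(b, r) = 1, and 1 ≤ t < b. Then r divides g(bw + t, b) for every integer w. -/
theorem stmt_8 (f : Polynomial ℤ) (n : ℕ) (r : ℤ)
    (hdeg : f.natDegree = n) (hr : IsGcdOfValues f r)
    (b t : ℤ) (hb : Prime b) (hcop : IsCoprime b r) (ht : 1 ≤ t) (htb : t < b) :
    ∀ w : ℤ, r ∣ ∑ i ∈ Finset.range (n + 1),
      f.coeff i * (b * w + t) ^ i * b ^ (n - i) := by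
  intro w
  obtain ⟨a, c, hac⟩ := hcop
  set x : ℤ := b * w + t with hx
  clear_value x
  set S : ℤ := ∑ i ∈ Finset.range (n + 1), f.coeff i * x ^ i * b ^ (n - i) with hS
  have hu : IsCoprime a r := ⟨b, c, by linear_combination hac⟩
  have hab1 : r ∣ a * b - 1 := ⟨-c, by linear_combination hac⟩
  have heval : f.eval (x * a) = ∑ i ∈ Finset.range (n + 1), f.coeff i * (x * a) ^ i := by
    rw [Polynomial.eval_eq_sum_range, hdeg]
  have hdiff : r ∣ a ^ n * S - f.eval (x * a) := by
    rw [heval, hS, Finset.mul_sum, ← Finset.sum_sub_distrib]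
    apply Finset.dvd_sum
    intro i hi
    have hin : i ≤ n := Nat.lt_succ_iff.mp (Finset.mem_range.mp hi)
    have hexp : a ^ n * (f.coeff i * x ^ i * b ^ (n - i)) - f.coeff i * (x * a) ^ i
        = f.coeff i * (x * a) ^ i * ((a * b) ^ (n - i) - 1) := by
      have : a ^ n = a ^ i * a ^ (n - i) := by
        rw [← pow_add, Nat.add_sub_cancel' hin]
      rw [this]; ring
    rw [hexp]
    exact Dvd.dvd.mul_left
      (dvd_trans hab1 (by simpa using sub_dvd_pow_sub_pow (a * b) 1 (n - i))) _
  have hev : r ∣ f.eval (x * a) := hr.2.1 _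
  have hmul : r ∣ a ^ n * S := by
    have := dvd_add hdiff hev
    simpa using this
  exact ((hu.pow_left).symm).dvd_of_dvd_mul_left hmul
end

section
/- Let f ∈ ℤ[x] with homogenization g, r = gcd{f(x) : x ∈ ℤ}, b a prime with gcd(b, c·r) = 1 (c the leading coefficient), and 1 ≤ t < b. Then gcd{g(bw + t, b) : w ∈ ℤ} = r. -/
/-- `r` is the (nonnegative) gcd of the given family of integers. -/
def IsGcdOfFamily (v : ℤ → ℤ) (r : ℤ) : Prop :=
  0 ≤ r ∧ (∀ x : ℤ, r ∣ v x) ∧ ∀ s : ℤ, (∀ x : ℤ, s ∣ v x) → s ∣ r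

theorem stmt_9 (f : Polynomial ℤ) (n : ℕ) (c r : ℤ)
    (hdeg : f.natDegree = n) (hc : f.leadingCoeff = c)
    (hr : IsGcdOfFamily (fun x => f.eval x) r)
    (b t : ℤ) (hb : Prime b) (hcop : IsCoprime b (c * r)) (ht : 1 ≤ t) (htb : t < b) :
    IsGcdOfFamily
      (fun w => ∑ i ∈ Finset.range (n + 1),
        f.coeff i * (b * w + t) ^ i * b ^ (n - i)) r := by
  obtain ⟨hr0, hrd, hrg⟩ := hr
  -- evaluation as a finite sum
  have hev : ∀ x : ℤ, f.eval x = ∑ i ∈ Finset.range (n + 1), f.coeff i * x ^ i := by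
    intro x
    rw [Polynomial.eval_eq_sum_range, hdeg]
  -- the key algebraic identity: ∑ cᵢ (b*x)^i b^(n-i) = b^n * f(x)
  have hsum_bx : ∀ x : ℤ,
      (∑ i ∈ Finset.range (n + 1), f.coeff i * (b * x) ^ i * b ^ (n - i))
        = b ^ n * f.eval x := by
    intro x
    rw [hev, Finset.mul_sum]
    apply Finset.sum_congr rfl
    intro i hi
    have hin : i ≤ n := Nat.lt_succ_iff.mp (Finset.mem_range.mp hi)
    have hbn : b ^ (n - i) * b ^ i = b ^ n := by
      rw [← pow_add, Nat.sub_add_cancel hin]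
    rw [mul_pow, ← hbn]; ring
  -- congruence of the sums
  have hcong : ∀ m z z' : ℤ, m ∣ z - z' →
      m ∣ (∑ i ∈ Finset.range (n + 1), f.coeff i * z ^ i * b ^ (n - i))
          - ∑ i ∈ Finset.range (n + 1), f.coeff i * z' ^ i * b ^ (n - i) := by
    intro m z z' hm
    rw [← Finset.sum_sub_distrib]
    apply Finset.dvd_sum
    intro i _
    have h1 : m ∣ z ^ i - z' ^ i := hm.trans (sub_dvd_pow_sub_pow z z' i)
    have h2 : f.coeff i * z ^ i * b ^ (n - i) - f.coeff i * z' ^ i * b ^ (n - i)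
        = (f.coeff i * b ^ (n - i)) * (z ^ i - z' ^ i) := by ring
    rw [h2]
    exact h1.mul_left _
  refine ⟨hr0, ?_, ?_⟩
  · -- r divides every value
    intro w
    have hbr : IsCoprime b r := hcop.of_isCoprime_of_dvd_right (dvd_mul_left r c)
    obtain ⟨u, v, huv⟩ := hbr
    set z : ℤ := b * w + t with hz
    have h1 : r ∣ u * b - 1 := ⟨-v, by linarith⟩
    have hA : r ∣ b ^ n * f.eval (u * z) := (hrd (u * z)).mul_left _
    have hB : b ^ n * f.eval (u * z)
        = ∑ i ∈ Finset.range (n + 1),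
            f.coeff i * z ^ i * b ^ (n - i) * (u * b) ^ i := by
      rw [hev, Finset.mul_sum]
      apply Finset.sum_congr rfl
      intro i hi
      have hin : i ≤ n := Nat.lt_succ_iff.mp (Finset.mem_range.mp hi)
      have hbn : b ^ (n - i) * b ^ i = b ^ n := by
        rw [← pow_add, Nat.sub_add_cancel hin]
      rw [mul_pow, mul_pow, ← hbn]; ring
    have hC : r ∣ (∑ i ∈ Finset.range (n + 1),
            f.coeff i * z ^ i * b ^ (n - i) * (u * b) ^ i)
          - ∑ i ∈ Finset.range (n + 1), f.coeff i * z ^ i * b ^ (n - i) := by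
      rw [← Finset.sum_sub_distrib]
      apply Finset.dvd_sum
      intro i _
      have h1' : r ∣ (u * b) ^ i - 1 := by
        have := h1.trans (sub_dvd_pow_sub_pow (u * b) 1 i)
        simpa using this
      have h2 : f.coeff i * z ^ i * b ^ (n - i) * (u * b) ^ i
            - f.coeff i * z ^ i * b ^ (n - i)
          = (f.coeff i * z ^ i * b ^ (n - i)) * ((u * b) ^ i - 1) := by ring
      rw [h2]
      exact h1'.mul_left _
    have := dvd_sub (hB ▸ hA) hC
    simpa using this
  · -- any common divisor divides r
    intro s hs
    have hb2 : 1 < b := lt_of_le_of_lt ht htb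
    have hbs : ¬ b ∣ s := by
      intro hdvd
      have h0 : s ∣ ∑ i ∈ Finset.range (n + 1), f.coeff i * t ^ i * b ^ (n - i) := by
        have := hs 0
        simpa using this
      have hbsum : b ∣ ∑ i ∈ Finset.range (n + 1), f.coeff i * t ^ i * b ^ (n - i) :=
        hdvd.trans h0
      have hsplit : (∑ i ∈ Finset.range (n + 1), f.coeff i * t ^ i * b ^ (n - i))
          = (∑ i ∈ Finset.range n, f.coeff i * t ^ i * b ^ (n - i)) + c * t ^ n := by
        rw [Finset.sum_range_succ]
        congr 1
        have : f.coeff n = c := by rw [← hc, Polynomial.leadingCoeff, hdeg]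
        simp [this]
      have hbfront : b ∣ ∑ i ∈ Finset.range n, f.coeff i * t ^ i * b ^ (n - i) := by
        apply Finset.dvd_sum
        intro i hi
        have hi' : i < n := Finset.mem_range.mp hi
        have : b ∣ b ^ (n - i) := dvd_pow_self b (Nat.sub_ne_zero_of_lt hi')
        exact this.mul_left _
      have hbct : b ∣ c * t ^ n := by
        have := dvd_sub hbsum hbfront
        rw [hsplit] at this
        simpa using this
      rcases hb.dvd_mul.mp hbct with hbc | hbt
      · exact hb.not_unit (hcop.isUnit_of_dvd' dvd_rfl (dvd_mul_of_dvd_left hbc r))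
      · have hbt' : b ∣ t := hb.dvd_of_dvd_pow hbt
        have := Int.le_of_dvd (by linarith) hbt'
        linarith
    have hsb : IsCoprime s b := (hb.coprime_iff_not_dvd.mpr hbs).symm
    apply hrg
    intro x
    obtain ⟨p, q, hpq⟩ := id hsb
    set w : ℤ := q * (b * x - t) with hw
    have hzz : s ∣ (b * w + t) - b * x :=
      ⟨-(p * (b * x - t)), by linear_combination (b * x - t) * hpq⟩
    have hdiff := hcong s (b * w + t) (b * x) hzz
    have h2 : s ∣ ∑ i ∈ Finset.range (n + 1), f.coeff i * (b * x) ^ i * b ^ (n - i) := by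
      have := dvd_sub (hs w) hdiff
      simpa using this
    rw [hsum_bx] at h2
    exact (IsCoprime.pow_right hsb).dvd_of_dvd_mul_left h2
end

section
/- Let f ∈ ℤ[x] of degree n with homogenization g, r = gcd{f(x) : x ∈ ℤ}, b a prime, t and w integers, and suppose p is a prime with gcd(b, p) = 1 and r·p = g(bw + t, b). If a is an integer such that z = (a·p + b·w + t)/b is an integer, then f(z) ≡ 0 (mod p). -/
theorem stmt_10 (f : Polynomial ℤ) (n : ℕ) (r : ℤ)
    (hdeg : f.natDegree = n) (hr : IsGcdOfValues f r)
    (b p : ℤ) (hb : Prime b) (hp : Prime p) (hbp : IsCoprime b p)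
    (t w a z : ℤ)
    (hval : r * p = ∑ i ∈ Finset.range (n + 1),
      f.coeff i * (b * w + t) ^ i * b ^ (n - i))
    (hz : b * z = a * p + b * w + t) :
    p ∣ f.eval z := by
  have hfe : f.eval z = ∑ i ∈ Finset.range (n + 1), f.coeff i * z ^ i := by
    rw [Polynomial.eval_eq_sum_range, hdeg]
  have key : p ∣ b ^ n * f.eval z := by
    have h1 : b ^ n * f.eval z - r * p
        = ∑ i ∈ Finset.range (n + 1),
            f.coeff i * ((b * z) ^ i - (b * w + t) ^ i) * b ^ (n - i) := by
      rw [hfe, hval, Finset.mul_sum, ← Finset.sum_sub_distrib]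
      apply Finset.sum_congr rfl
      intro i hi
      have hi' : i ≤ n := Nat.lt_succ_iff.mp (Finset.mem_range.mp hi)
      have hbn : b ^ n = b ^ i * b ^ (n - i) := by
        rw [← pow_add]; congr 1; omega
      rw [hbn, mul_pow]; ring
    have h2 : p ∣ b ^ n * f.eval z - r * p := by
      rw [h1]
      apply Finset.dvd_sum
      intro i _
      have hd : p ∣ (b * z) ^ i - (b * w + t) ^ i := by
        refine dvd_trans ⟨a, ?_⟩ (sub_dvd_pow_sub_pow _ _ i)
        linarith [hz]
      exact ((hd.mul_left _).mul_right _)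
    have h3 : p ∣ r * p := ⟨r, mul_comm r p⟩
    have := dvd_add h2 h3
    simpa using this
  exact (hbp.pow_left.symm).dvd_of_dvd_mul_left key
end

section
/- Let b be a prime with b ≡ 3 (mod 4). Then the maximum number of consecutive integers in {1, ..., b−1} that are all quadratic residues mod b, or all quadratic nonresidues mod b, is less than √b. -/
/-- Stepping lemma: if `1 ≤ m ≤ k`, `p ≤ m*k`, and `[c, c+k) ⊆ [0,p)`, then among the
`k` multiples `m*(a+j)` for `j < k`, some residue mod `p` lands in `[c, c+k)`. -/
lemma hit_interval (p m k a c : ℕ) (hm : 1 ≤ m) (hmk : m ≤ k) (hpmk : p ≤ m * k)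
    (hck : c + k ≤ p) (hp : 0 < p) :
    ∃ j < k, c ≤ m * (a + j) % p ∧ m * (a + j) % p < c + k := by
  have hk : 1 ≤ k := le_trans hm hmk
  set w0 := m * a with hw0
  have hex : ∃ n, w0 < c + n * p + k := by
    refine ⟨w0 + 1, ?_⟩
    have h1 : w0 + 1 ≤ (w0 + 1) * p := Nat.le_mul_of_pos_right _ hp
    omega
  set n := Nat.find hex with hn
  have hC1 : w0 < c + n * p + k := Nat.find_spec hex
  have hC2 : c + n * p + k ≤ w0 + p := by
    rcases Nat.eq_zero_or_pos n with h0 | h1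
    · rw [h0]
      simp only [Nat.zero_mul]
      omega
    · have hmin := Nat.find_min hex (show n - 1 < n by omega)
      push_neg at hmin
      have hnp : (n - 1) * p + p = n * p := by
        rw [← Nat.succ_mul]
        congr 1
        omega
      omega
  have hkm1 : m * (k - 1) + m = m * k := by
    rw [← Nat.mul_succ]
    congr 1
    omega
  have hex2 : ∃ j, c + n * p ≤ w0 + m * j := ⟨k - 1, by omega⟩
  set j := Nat.find hex2 with hj
  have hjspec : c + n * p ≤ w0 + m * j := Nat.find_spec hex2
  have hjle : j ≤ k - 1 := Nat.find_min' hex2 (show c + n * p ≤ w0 + m * (k - 1) by omega)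
  have hjub : w0 + m * j < c + n * p + k := by
    rcases Nat.eq_zero_or_pos j with h0 | h1
    · rw [h0]
      simp only [Nat.mul_zero]
      omega
    · have hmin := Nat.find_min hex2 (show j - 1 < j by omega)
      push_neg at hmin
      have hmj : m * (j - 1) + m = m * j := by
        rw [← Nat.mul_succ]
        congr 1
        omega
      omega
  refine ⟨j, by omega, ?_⟩
  have hw : m * (a + j) = w0 + m * j := by rw [hw0]; ring
  have hr : m * (a + j) = c + (w0 + m * j - (c + n * p)) + n * p := by omega
  rw [hr, Nat.add_mul_mod_self_right, Nat.mod_eq_of_lt (by omega)]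
  omega

theorem stmt_12 (b : ℕ) (hb : b.Prime) (hb3 : b % 4 = 3)
    (a k : ℕ) (ha : 1 ≤ a) (hrange : a + k - 1 ≤ b - 1)
    (hrun : (∀ j < k, IsSquare ((a + j : ℕ) : ZMod b)) ∨
            (∀ j < k, ¬ IsSquare ((a + j : ℕ) : ZMod b))) :
    (k : ℝ) < Real.sqrt b := by
  by_contra hcon
  push_neg at hcon
  haveI : Fact b.Prime := ⟨hb⟩
  have hb1 : 3 ≤ b := by
    have := hb.two_le
    omega
  have hbk2 : b ≤ k * k := by
    have h2 : (b : ℝ) ≤ (k : ℝ) * (k : ℝ) := by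
      nlinarith [Real.sq_sqrt (show (0:ℝ) ≤ (b:ℕ) by positivity), Real.sqrt_nonneg (b:ℕ)]
    exact_mod_cast h2
  have hk2 : 2 ≤ k := by nlinarith
  have hak : a + k ≤ b := by omega
  -- the multiplier m = ⌈b/k⌉
  obtain ⟨m, r0, hdm, hr0⟩ : ∃ m r0, b + k - 1 = k * m + r0 ∧ r0 < k :=
    ⟨(b + k - 1) / k, (b + k - 1) % k, (Nat.div_add_mod _ _).symm, Nat.mod_lt _ (by omega)⟩
  have hcomm : k * m = m * k := Nat.mul_comm k m
  have hpmk : b ≤ m * k := by omega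
  have hmk : m ≤ k := by
    have hx : k * (k + 1) = k * k + k := by ring
    have hlt : k * m < k * (k + 1) := by omega
    have := Nat.lt_of_mul_lt_mul_left hlt
    omega
  have hm1 : 1 ≤ m := by
    rcases Nat.eq_zero_or_pos m with h0 | h1
    · subst h0
      simp only [Nat.mul_zero] at hdm
      omega
    · exact h1
  -- quadratic character setup
  set χ := quadraticChar (ZMod b) with hχ
  have hne : ∀ j < k, ((a + j : ℕ) : ZMod b) ≠ 0 := by
    intro j hj h
    rw [ZMod.natCast_eq_zero_iff] at h
    have := Nat.le_of_dvd (by omega) h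
    omega
  obtain ⟨e, he, hrune⟩ :
      ∃ e : ℤ, (e = 1 ∨ e = -1) ∧ ∀ j < k, χ ((a + j : ℕ) : ZMod b) = e := by
    rcases hrun with h | h
    · exact ⟨1, Or.inl rfl, fun j hj =>
        (quadraticChar_one_iff_isSquare (hne j hj)).mpr (h j hj)⟩
    · exact ⟨-1, Or.inr rfl, fun j hj =>
        quadraticChar_neg_one_iff_not_isSquare.mpr (h j hj)⟩
  have hneg1 : χ (-1 : ZMod b) = -1 := by
    rw [hχ, quadraticChar_neg_one_iff_not_isSquare, ZMod.exists_sq_eq_neg_one_iff]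
    simp [hb3]
  have hcast : ∀ j, ((m * (a + j) % b : ℕ) : ZMod b)
      = ((m : ℕ) : ZMod b) * ((a + j : ℕ) : ZMod b) := by
    intro j
    rw [ZMod.natCast_mod]
    push_cast
    ring
  -- first hit: interval [a, a+k)
  obtain ⟨j₁, hj₁, hr₁l, hr₁u⟩ :=
    hit_interval b m k a a hm1 hmk hpmk (by omega) (by omega)
  have hchim1 : χ ((m : ℕ) : ZMod b) * e = e := by
    have h1 : m * (a + j₁) % b = a + (m * (a + j₁) % b - a) := by omega
    have h2 : m * (a + j₁) % b - a < k := by omega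
    calc χ ((m : ℕ) : ZMod b) * e
        = χ ((m : ℕ) : ZMod b) * χ ((a + j₁ : ℕ) : ZMod b) := by rw [hrune j₁ hj₁]
      _ = χ (((m : ℕ) : ZMod b) * ((a + j₁ : ℕ) : ZMod b)) := (map_mul χ _ _).symm
      _ = χ ((m * (a + j₁) % b : ℕ) : ZMod b) := by rw [hcast j₁]
      _ = e := by rw [h1]; exact hrune _ h2
  -- second hit: interval [b-a-k+1, b-a+1)
  obtain ⟨j₂, hj₂, hr₂l, hr₂u⟩ :=
    hit_interval b m k a (b - a - k + 1) hm1 hmk hpmk (by omega) (by omega)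
  set r := m * (a + j₂) % b with hrdef
  have hrb : r < b := Nat.mod_lt _ (by omega)
  have hr2k : b - r - a < k := by omega
  have h5 : ((b - r : ℕ) : ZMod b) = ((a + (b - r - a) : ℕ) : ZMod b) := by
    congr 1
    omega
  have hsum : ((r : ℕ) : ZMod b) + ((b - r : ℕ) : ZMod b) = 0 := by
    rw [← Nat.cast_add, show r + (b - r) = b by omega, ZMod.natCast_self]
  have hcast2 : ((r : ℕ) : ZMod b) = -(((b - r : ℕ) : ZMod b)) := by
    linear_combination hsum
  have hbre : χ ((b - r : ℕ) : ZMod b) = e := by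
    rw [h5]; exact hrune _ hr2k
  have hchim2 : χ ((m : ℕ) : ZMod b) * e = -e := by
    calc χ ((m : ℕ) : ZMod b) * e
        = χ ((m : ℕ) : ZMod b) * χ ((a + j₂ : ℕ) : ZMod b) := by rw [hrune j₂ hj₂]
      _ = χ (((m : ℕ) : ZMod b) * ((a + j₂ : ℕ) : ZMod b)) := (map_mul χ _ _).symm
      _ = χ ((r : ℕ) : ZMod b) := by rw [hrdef, hcast j₂]
      _ = χ ((-1 : ZMod b) * ((b - r : ℕ) : ZMod b)) := by rw [hcast2]; ring_nf
      _ = χ (-1 : ZMod b) * χ ((b - r : ℕ) : ZMod b) := map_mul χ _ _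
      _ = -e := by rw [hneg1, hbre]; ring
  rcases he with he | he <;> rw [he] at hchim1 hchim2 <;> omega
end
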